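/- For every α with 0 < α < 1 and every δ with 0 < δ small enough, the function ‖(x,y)‖ := δ·√(α²x² + y²) + (1 − αδ)|x| + (1 − δ)|y| is a rotund norm on ℝ², and it satisfies ‖v‖ ≤ ‖v‖₁ for all v ∈ ℝ² (in particular ‖(1,0)‖ = ‖(0,1)‖ = 1). -/

import Mathlib

/-- The "inflated ℓ¹" function on the plane with parameters `α`, `δ`. -/
noncomputable def inflatedL1 (α δ : ℝ) (v : ℝ × ℝ) : ℝ :=
  δ * Real.sqrt (α ^ 2 * v.1 ^ 2 + v.2 ^ 2) + (1 - α * δ) * |v.1| + (1 - δ) * |v.2|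

lemma sqrt_sq_add_sq_eq_norm (a b : ℝ) :
    Real.sqrt (a ^ 2 + b ^ 2) = ‖(⟨a, b⟩ : ℂ)‖ := by
  rw [Complex.norm_def, Complex.normSq_mk]
  ring_nf

lemma inflated_sqrt_eq (α : ℝ) (v : ℝ × ℝ) :
    Real.sqrt (α ^ 2 * v.1 ^ 2 + v.2 ^ 2) = ‖(⟨α * v.1, v.2⟩ : ℂ)‖ := by
  rw [← sqrt_sq_add_sq_eq_norm]; ring_nf

/-- For `0 < α < 1` and all sufficiently small `δ > 0`, `inflatedL1 α δ` is a rotund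
norm on `ℝ²` dominated by the ℓ¹ norm. -/
theorem inflatedL1_rotund_norm :
    ∀ α : ℝ, 0 < α → α < 1 → ∃ δ₀ : ℝ, 0 < δ₀ ∧ ∀ δ : ℝ, 0 < δ → δ < δ₀ →
      (∀ v : ℝ × ℝ, 0 ≤ inflatedL1 α δ v) ∧
      (∀ v : ℝ × ℝ, inflatedL1 α δ v = 0 → v = 0) ∧
      (∀ (c : ℝ) (v : ℝ × ℝ), inflatedL1 α δ (c • v) = |c| * inflatedL1 α δ v) ∧
      (∀ u v : ℝ × ℝ, inflatedL1 α δ (u + v) ≤ inflatedL1 α δ u + inflatedL1 α δ v) ∧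
      (∀ u v : ℝ × ℝ, inflatedL1 α δ u = 1 → inflatedL1 α δ v = 1 → u ≠ v →
        inflatedL1 α δ ((1 / 2 : ℝ) • (u + v)) < 1) ∧
      (∀ v : ℝ × ℝ, inflatedL1 α δ v ≤ |v.1| + |v.2|) := by
  intro α hα0 hα1
  refine ⟨1, one_pos, fun δ hδ0 hδ1 => ?_⟩
  have hαδ : 0 < 1 - α * δ := by nlinarith
  have hδ' : 0 < 1 - δ := by linarith
  -- nonnegativity
  have hnonneg : ∀ v : ℝ × ℝ, 0 ≤ inflatedL1 α δ v := by
    intro v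
    have h1 : 0 ≤ Real.sqrt (α ^ 2 * v.1 ^ 2 + v.2 ^ 2) := Real.sqrt_nonneg _
    have h2 : 0 ≤ |v.1| := abs_nonneg _
    have h3 : 0 ≤ |v.2| := abs_nonneg _
    unfold inflatedL1
    positivity
  -- definiteness
  have hdef : ∀ v : ℝ × ℝ, inflatedL1 α δ v = 0 → v = 0 := by
    intro v hv
    have h1 : 0 ≤ δ * Real.sqrt (α ^ 2 * v.1 ^ 2 + v.2 ^ 2) := by positivity
    have h2 : 0 ≤ |v.1| := abs_nonneg _
    have h3 : 0 ≤ |v.2| := abs_nonneg _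
    unfold inflatedL1 at hv
    have hx : |v.1| = 0 := by nlinarith
    have hy : |v.2| = 0 := by nlinarith
    have : v.1 = 0 := abs_eq_zero.mp hx
    have : v.2 = 0 := abs_eq_zero.mp hy
    exact Prod.ext (abs_eq_zero.mp hx) (abs_eq_zero.mp hy)
  -- homogeneity
  have hhom : ∀ (c : ℝ) (v : ℝ × ℝ), inflatedL1 α δ (c • v) = |c| * inflatedL1 α δ v := by
    intro c v
    unfold inflatedL1
    have h1 : α ^ 2 * (c • v).1 ^ 2 + (c • v).2 ^ 2
        = c ^ 2 * (α ^ 2 * v.1 ^ 2 + v.2 ^ 2) := by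
      simp [Prod.smul_fst, Prod.smul_snd, smul_eq_mul]; ring
    rw [h1, Real.sqrt_mul (sq_nonneg c), Real.sqrt_sq_eq_abs]
    simp [Prod.smul_fst, Prod.smul_snd, smul_eq_mul, abs_mul]
    ring
  -- triangle inequality
  have htri : ∀ u v : ℝ × ℝ,
      inflatedL1 α δ (u + v) ≤ inflatedL1 α δ u + inflatedL1 α δ v := by
    intro u v
    unfold inflatedL1
    have hsq : Real.sqrt (α ^ 2 * (u + v).1 ^ 2 + (u + v).2 ^ 2)
        ≤ Real.sqrt (α ^ 2 * u.1 ^ 2 + u.2 ^ 2)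
          + Real.sqrt (α ^ 2 * v.1 ^ 2 + v.2 ^ 2) := by
      rw [inflated_sqrt_eq, inflated_sqrt_eq, inflated_sqrt_eq]
      have : (⟨α * (u + v).1, (u + v).2⟩ : ℂ)
          = (⟨α * u.1, u.2⟩ : ℂ) + (⟨α * v.1, v.2⟩ : ℂ) := by
        apply Complex.ext <;> simp [Prod.fst_add, Prod.snd_add] <;> ring
      rw [this]
      exact norm_add_le _ _
    have h1 : |(u + v).1| ≤ |u.1| + |v.1| := abs_add_le _ _
    have h2 : |(u + v).2| ≤ |u.2| + |v.2| := abs_add_le _ _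
    simp only [Prod.fst_add, Prod.snd_add] at *
    nlinarith
  refine ⟨hnonneg, hdef, hhom, htri, ?_, ?_⟩
  · -- rotundity
    intro u v hu hv huv
    have hmid : inflatedL1 α δ ((1 / 2 : ℝ) • (u + v)) ≤ 1 := by
      rw [hhom]
      have := htri u v
      rw [hu, hv] at this
      rw [abs_of_pos (by norm_num : (0:ℝ) < 1/2)]
      linarith
    rcases lt_or_eq_of_le hmid with h | h
    · exact h
    exfalso
    -- all inequalities in the triangle inequality are equalities
    have hsum : inflatedL1 α δ (u + v) = 2 := by
      rw [hhom, abs_of_pos (by norm_num : (0:ℝ) < 1/2)] at h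
      linarith
    set Eu := Real.sqrt (α ^ 2 * u.1 ^ 2 + u.2 ^ 2) with hEu
    set Ev := Real.sqrt (α ^ 2 * v.1 ^ 2 + v.2 ^ 2) with hEv
    set Es := Real.sqrt (α ^ 2 * (u + v).1 ^ 2 + (u + v).2 ^ 2) with hEs
    have hsq : Es ≤ Eu + Ev := by
      rw [hEs, hEu, hEv, inflated_sqrt_eq, inflated_sqrt_eq, inflated_sqrt_eq]
      have : (⟨α * (u + v).1, (u + v).2⟩ : ℂ)
          = (⟨α * u.1, u.2⟩ : ℂ) + (⟨α * v.1, v.2⟩ : ℂ) := by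
        apply Complex.ext <;> simp [Prod.fst_add, Prod.snd_add] <;> ring
      rw [this]
      exact norm_add_le _ _
    have h1 : |(u + v).1| ≤ |u.1| + |v.1| := abs_add_le _ _
    have h2 : |(u + v).2| ≤ |u.2| + |v.2| := abs_add_le _ _
    have key : inflatedL1 α δ u + inflatedL1 α δ v = 2 := by rw [hu, hv]; norm_num
    unfold inflatedL1 at hsum key
    rw [← hEs] at hsum
    rw [← hEu, ← hEv] at key
    -- forces equality in the Euclidean triangle inequality
    have hEeq : Es = Eu + Ev := by nlinarith
    -- the complex numbers
    set z : ℂ := ⟨α * u.1, u.2⟩ with hz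
    set w : ℂ := ⟨α * v.1, v.2⟩ with hw
    have hzw : (⟨α * (u + v).1, (u + v).2⟩ : ℂ) = z + w := by
      apply Complex.ext <;> simp [hz, hw, Prod.fst_add, Prod.snd_add] <;> ring
    have hnorm : ‖z + w‖ = ‖z‖ + ‖w‖ := by
      rw [← hzw, ← inflated_sqrt_eq, ← inflated_sqrt_eq, ← inflated_sqrt_eq]
      exact hEeq
    have hz0 : z ≠ 0 := by
      intro h0
      have h1 : α * u.1 = 0 := by
        have := congrArg Complex.re h0; simpa [hz] using this
      have h2 : u.2 = 0 := by
        have := congrArg Complex.im h0; simpa [hz] using this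
      have hu1 : u.1 = 0 := by
        rcases mul_eq_zero.mp h1 with h | h
        · exact absurd h (ne_of_gt hα0)
        · exact h
      have : u = 0 := Prod.ext hu1 h2
      rw [this] at hu
      simp [inflatedL1] at hu
    have hray : SameRay ℝ z w := sameRay_iff_norm_add.mpr hnorm
    obtain ⟨t, ht0, htw⟩ := hray.exists_nonneg_left hz0
    -- translate to v = t • u
    have hre : t * (α * u.1) = α * v.1 := by
      have h := congrArg Complex.re htw
      simpa [hz, hw, Complex.real_smul] using h
    have him : t * u.2 = v.2 := by
      have h := congrArg Complex.im htw
      simpa [hz, hw, Complex.real_smul] using h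
    have hv1 : v.1 = t * u.1 :=
      (mul_left_cancel₀ (ne_of_gt hα0) (by linear_combination hre)).symm
    have hv2 : v.2 = t * u.2 := him.symm
    have hveq : v = t • u := by
      apply Prod.ext <;> simp [Prod.smul_fst, Prod.smul_snd, smul_eq_mul, hv1, hv2]
    have : inflatedL1 α δ v = |t| * inflatedL1 α δ u := by rw [hveq, hhom]
    rw [hu, hv, abs_of_nonneg ht0, mul_one] at this
    rw [← this, one_smul] at hveq
    exact huv hveq.symm
  · -- domination by ℓ¹
    intro v
    have hsq : Real.sqrt (α ^ 2 * v.1 ^ 2 + v.2 ^ 2) ≤ α * |v.1| + |v.2| := by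
      rw [show α ^ 2 * v.1 ^ 2 + v.2 ^ 2 = (α * |v.1|) ^ 2 + |v.2| ^ 2 by
        rw [mul_pow, sq_abs, sq_abs]]
      have h0 : 0 ≤ α * |v.1| := by positivity
      have h1 : 0 ≤ |v.2| := abs_nonneg _
      calc Real.sqrt ((α * |v.1|) ^ 2 + |v.2| ^ 2)
          ≤ Real.sqrt ((α * |v.1| + |v.2|) ^ 2) := by
            apply Real.sqrt_le_sqrt; nlinarith
        _ = α * |v.1| + |v.2| := Real.sqrt_sq (by positivity)
    unfold inflatedL1
    nlinarith [abs_nonneg v.1, abs_nonneg v.2]
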